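/- For every integer N ≥ 3 and every λ ∈ [0,1], the operator Y := W_C^λ − λ·W_C is positive semidefinite, where W_C is the cluster-state witness operator and W_C^λ its modified (unsharp) version. -/

import Mathlib

open Matrix
open scoped ComplexOrder

noncomputable section

/-- The space of operators on `N` qubits: complex `2^N × 2^N` matrices, with the
`N`-fold tensor-product structure made explicit by indexing rows and columns by
functions `Fin N → Fin 2`. -/
abbrev QM (N : ℕ) := Matrix (Fin N → Fin 2) (Fin N → Fin 2) ℂ

/-- The Pauli matrix σ_x. -/
def sigx : Matrix (Fin 2) (Fin 2) ℂ := !![0, 1; 1, 0]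

/-- The Pauli matrix σ_z. -/
def sigz : Matrix (Fin 2) (Fin 2) ℂ := !![1, 0; 0, -1]

/-- The tensor (Kronecker) product `f 0 ⊗ f 1 ⊗ ⋯ ⊗ f (N-1)` of single-qubit operators. -/
def tensorAll (N : ℕ) (f : Fin N → Matrix (Fin 2) (Fin 2) ℂ) : QM N :=
  Matrix.of fun v w => ∏ i, f i (v i) (w i)

/-- The single-qubit operator `M` acting on qubit `m`, tensored with the identity
on all other qubits. -/
def site (N : ℕ) (m : Fin N) (M : Matrix (Fin 2) (Fin 2) ℂ) : QM N :=
  tensorAll N (fun i => if i = m then M else 1)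

/-- Cluster-state stabilizer generator (0-based index `m : Fin N`): σ_x on qubit `m`
and σ_z on its nearest neighbour(s); it represents the 1-based generator `S_{m+1}`. -/
def clS (N : ℕ) (m : Fin N) : QM N :=
  tensorAll N (fun i =>
    if i = m then sigx
    else if i.val + 1 = m.val ∨ m.val + 1 = i.val then sigz else 1)

/-- Factor `(I + S_{m+1})/2` of the cluster witness. -/
def clFactor (N : ℕ) (m : Fin N) : QM N := (1/2 : ℂ) • ((1 : QM N) + clS N m)

/-- Factor of the modified cluster witness: `(I + λ S_N)/2` for the last generator and
`(I + S_{m+1})/2` otherwise. -/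
def clFactorMod (N : ℕ) (lam : ℝ) (m : Fin N) : QM N :=
  if m.val = N - 1 then (1/2 : ℂ) • ((1 : QM N) + (lam : ℂ) • clS N m)
  else (1/2 : ℂ) • ((1 : QM N) + clS N m)

/-- Product of the cluster-witness factors over the 1-based indices `m+1` of parity
`r` (`r = 1` gives the even 1-based indices, `r = 0` the odd ones); the factors
pairwise commute, so the list ordering is immaterial. -/
def clProd (N : ℕ) (r : ℕ) : QM N :=
  (((List.finRange N).filter (fun m => m.val % 2 = r)).map (clFactor N)).prod

/-- The analogous parity product for the modified cluster witness; the factor carrying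
`λ` (the one for `S_N`) lies in the even product when `N` is even and in the odd one
when `N` is odd. -/
def clProdMod (N : ℕ) (lam : ℝ) (r : ℕ) : QM N :=
  (((List.finRange N).filter (fun m => m.val % 2 = r)).map (clFactorMod N lam)).prod

/-- The cluster-state genuine-multipartite-entanglement witness
`W_C = 3 I − 2 [∏_{even m}(I+S_m)/2 + ∏_{odd m}(I+S_m)/2]`. -/
def clWitness (N : ℕ) : QM N :=
  (3 : ℂ) • (1 : QM N) - (2 : ℂ) • (clProd N 1 + clProd N 0)

/-- The modified (unsharp) cluster witness `W_C^λ`, obtained from `W_C` by replacing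
the factor `(I+S_N)/2` by `(I+λS_N)/2`. -/
def clWitnessMod (N : ℕ) (lam : ℝ) : QM N :=
  (3 : ℂ) • (1 : QM N) - (2 : ℂ) • (clProdMod N lam 1 + clProdMod N lam 0)

lemma tensorAll_mul (N : ℕ) (f g : Fin N → Matrix (Fin 2) (Fin 2) ℂ) :
    tensorAll N f * tensorAll N g = tensorAll N (fun i => f i * g i) := by
  ext v w
  show ∑ u : Fin N → Fin 2, (∏ i, f i (v i) (u i)) * ∏ i, g i (u i) (w i)
      = ∏ i, (f i * g i) (v i) (w i)
  simp only [Matrix.mul_apply, ← Finset.prod_mul_distrib]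
  rw [Fintype.prod_sum (fun i x => f i (v i) x * g i x (w i))]

lemma tensorAll_conjTranspose (N : ℕ) (f : Fin N → Matrix (Fin 2) (Fin 2) ℂ) :
    (tensorAll N f)ᴴ = tensorAll N (fun i => (f i)ᴴ) := by
  ext v w
  show star (∏ i, f i (w i) (v i)) = ∏ i, (f i)ᴴ (v i) (w i)
  rw [star_prod]
  rfl

lemma tensorAll_one (N : ℕ) : tensorAll N (fun _ => 1) = 1 := by
  ext v w
  show (∏ i, (1 : Matrix (Fin 2) (Fin 2) ℂ) (v i) (w i)) = (1 : QM N) v w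
  simp only [Matrix.one_apply]
  rw [Finset.prod_boole]
  simp [funext_iff]

lemma sigx_ct : sigxᴴ = sigx := by
  ext i j; fin_cases i <;> fin_cases j <;> simp [sigx, conjTranspose_apply]

lemma sigz_ct : sigzᴴ = sigz := by
  ext i j; fin_cases i <;> fin_cases j <;> simp [sigz, conjTranspose_apply]

lemma sigx_sq : sigx * sigx = 1 := by
  ext i j; fin_cases i <;> fin_cases j <;> simp [sigx, Matrix.mul_apply, Fin.sum_univ_two, Matrix.one_apply]

lemma sigz_sq : sigz * sigz = 1 := by
  ext i j; fin_cases i <;> fin_cases j <;> simp [sigz, Matrix.mul_apply, Fin.sum_univ_two, Matrix.one_apply]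

lemma clS_herm (N : ℕ) (m : Fin N) : (clS N m)ᴴ = clS N m := by
  unfold clS
  rw [tensorAll_conjTranspose]
  apply congrArg (tensorAll N)
  funext i
  by_cases h1 : i = m
  · simp [h1, sigx_ct]
  · by_cases h2 : i.val + 1 = m.val ∨ m.val + 1 = i.val <;> simp [h1, h2, sigz_ct]

lemma clS_sq (N : ℕ) (m : Fin N) : clS N m * clS N m = 1 := by
  unfold clS
  rw [tensorAll_mul, ← tensorAll_one N]
  apply congrArg (tensorAll N)
  funext i
  by_cases h1 : i = m
  · simp [h1, sigx_sq]
  · by_cases h2 : i.val + 1 = m.val ∨ m.val + 1 = i.val <;> simp [h1, h2, sigz_sq]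

lemma clS_comm (N : ℕ) (a b : Fin N) (hp : a.val % 2 = b.val % 2) (hab : a ≠ b) :
    Commute (clS N a) (clS N b) := by
  have hv : a.val ≠ b.val := fun h => hab (Fin.ext h)
  show _ = _
  unfold clS
  rw [tensorAll_mul, tensorAll_mul]
  apply congrArg (tensorAll N)
  funext i
  by_cases h1 : i = a
  · subst h1
    rw [if_neg hab, if_neg (by omega : ¬(i.val + 1 = b.val ∨ b.val + 1 = i.val))]
    rw [mul_one, one_mul]
  · by_cases h2 : i = b
    · subst h2
      rw [if_neg (Ne.symm hab)]
      rw [if_neg (by omega : ¬(i.val + 1 = a.val ∨ a.val + 1 = i.val))]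
      rw [mul_one, one_mul]
    · by_cases h3 : i.val + 1 = a.val ∨ a.val + 1 = i.val <;>
        by_cases h4 : i.val + 1 = b.val ∨ b.val + 1 = i.val <;>
        simp [h1, h2, h3, h4]

lemma clFactor_herm (N : ℕ) (m : Fin N) : (clFactor N m)ᴴ = clFactor N m := by
  unfold clFactor
  rw [conjTranspose_smul, conjTranspose_add, conjTranspose_one, clS_herm]
  norm_num

lemma clFactor_idem (N : ℕ) (m : Fin N) : clFactor N m * clFactor N m = clFactor N m := by
  unfold clFactor
  rw [smul_mul_smul_comm, add_mul, mul_add, mul_add, clS_sq]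
  simp only [one_mul, mul_one]
  module

lemma clFactor_comm (N : ℕ) (a b : Fin N) (hp : a.val % 2 = b.val % 2) (hab : a ≠ b) :
    Commute (clFactor N a) (clFactor N b) := by
  have h := clS_comm N a b hp hab
  have h2 : Commute ((1 : QM N) + clS N a) (1 + clS N b) :=
    ((Commute.one_right _).add_right (((Commute.one_left _).add_left h)))
  exact (h2.smul_left _).smul_right _

lemma prod_herm_idem (N : ℕ) (l : List (QM N)) (hc : l.Pairwise Commute)
    (hh : ∀ P ∈ l, Pᴴ = P) (hi : ∀ P ∈ l, P * P = P) :
    (l.prod)ᴴ = l.prod ∧ l.prod * l.prod = l.prod := by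
  induction l with
  | nil => simp
  | cons a t ih =>
    rw [List.pairwise_cons] at hc
    obtain ⟨ihh, ihi⟩ := ih hc.2 (fun P hP => hh P (List.mem_cons_of_mem _ hP))
      (fun P hP => hi P (List.mem_cons_of_mem _ hP))
    have hco : Commute a t.prod := Commute.list_prod_right _ _ hc.1
    have ha : aᴴ = a := hh a List.mem_cons_self
    have hai : a * a = a := hi a List.mem_cons_self
    rw [List.prod_cons]
    constructor
    · rw [conjTranspose_mul, ihh, ha, ← hco.eq]
    · calc a * t.prod * (a * t.prod) = a * (t.prod * a) * t.prod := by
            rw [mul_assoc, mul_assoc, mul_assoc]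
          _ = a * a * (t.prod * t.prod) := by rw [← hco.eq, mul_assoc, mul_assoc, ← mul_assoc]
          _ = a * t.prod := by rw [hai, ihi]

lemma one_sub_proj_psd (N : ℕ) (P : QM N) (hh : Pᴴ = P) (hi : P * P = P) :
    ((1 : QM N) - P).PosSemidef := by
  have h1 : ((1 : QM N) - P)ᴴ = 1 - P := by rw [conjTranspose_sub, conjTranspose_one, hh]
  have h2 : ((1 : QM N) - P) * (1 - P) = 1 - P := by
    rw [sub_mul, mul_sub, mul_sub, hi, one_mul, one_mul, mul_one]
    abel
  have := Matrix.posSemidef_conjTranspose_mul_self ((1 : QM N) - P)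
  rwa [h1, h2] at this

lemma psd_real_smul (N : ℕ) (c : ℝ) (hc : 0 ≤ c) (M : QM N) (hM : M.PosSemidef) :
    ((c : ℂ) • M).PosSemidef := by
  rw [posSemidef_iff_dotProduct_mulVec]
  constructor
  · show _ᴴ = _
    rw [conjTranspose_smul, hM.1.eq]
    congr 1
    exact Complex.conj_ofReal c
  · intro x
    rw [Matrix.smul_mulVec, dotProduct_smul, smul_eq_mul]
    exact mul_nonneg (by exact_mod_cast hc) (hM.dotProduct_mulVec_nonneg x)

def prefixProd (n : ℕ) (r : ℕ) : QM (n+1) :=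
  (((((List.finRange n).filter (fun m => m.val % 2 = r)).map Fin.castSucc).map
    (clFactor (n+1))).prod)

lemma factors_herm_idem (N : ℕ) (l : List (Fin N)) (r : ℕ) (hn : l.Nodup)
    (hp : ∀ m ∈ l, m.val % 2 = r) :
    ((l.map (clFactor N)).prod)ᴴ = (l.map (clFactor N)).prod ∧
      (l.map (clFactor N)).prod * (l.map (clFactor N)).prod = (l.map (clFactor N)).prod := by
  apply prod_herm_idem
  · rw [List.pairwise_map]
    refine hn.imp_of_mem ?_
    intro a b ha hb hab
    exact clFactor_comm N a b ((hp a ha).trans (hp b hb).symm) hab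
  · intro P hP
    obtain ⟨m, _, rfl⟩ := List.mem_map.mp hP
    exact clFactor_herm N m
  · intro P hP
    obtain ⟨m, _, rfl⟩ := List.mem_map.mp hP
    exact clFactor_idem N m

lemma clProd_herm_idem (N : ℕ) (r : ℕ) :
    (clProd N r)ᴴ = clProd N r ∧ clProd N r * clProd N r = clProd N r := by
  apply factors_herm_idem N _ r ((List.nodup_finRange N).filter _)
  intro m hm
  simpa using (List.mem_filter.mp hm).2

lemma prefixProd_herm_idem (n : ℕ) (r : ℕ) :
    (prefixProd n r)ᴴ = prefixProd n r ∧
      prefixProd n r * prefixProd n r = prefixProd n r := by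
  apply factors_herm_idem (n+1) _ r
    (((List.nodup_finRange n).filter _).map (Fin.castSucc_injective n))
  intro m hm
  obtain ⟨m', hm', rfl⟩ := List.mem_map.mp hm
  simpa using (List.mem_filter.mp hm').2

lemma filter_split (n : ℕ) (r : ℕ) (hr : n % 2 = r) :
    (List.finRange (n+1)).filter (fun m => decide (m.val % 2 = r))
      = ((List.finRange n).filter (fun m => decide (m.val % 2 = r))).map Fin.castSucc
        ++ [Fin.last n] := by
  rw [List.finRange_succ_last, List.filter_append]
  congr 1
  · rw [List.filter_map]
    congr 1
  · simp [Fin.last, hr]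

lemma mem_prefix_ne (n : ℕ) (r : ℕ) (m : Fin (n+1))
    (hm : m ∈ ((List.finRange n).filter (fun m => decide (m.val % 2 = r))).map Fin.castSucc) :
    m.val ≠ n := by
  obtain ⟨m', _, rfl⟩ := List.mem_map.mp hm
  exact Nat.ne_of_lt m'.isLt

lemma clProd_split (n : ℕ) (r : ℕ) (hr : n % 2 = r) :
    clProd (n+1) r = prefixProd n r * clFactor (n+1) (Fin.last n) := by
  unfold clProd prefixProd
  rw [filter_split n r hr, List.map_append, List.prod_append, List.map_singleton,
    List.prod_singleton]

lemma clProdMod_split (n : ℕ) (lam : ℝ) (r : ℕ) (hr : n % 2 = r) :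
    clProdMod (n+1) lam r
      = prefixProd n r * ((1/2 : ℂ) • ((1 : QM (n+1)) + (lam : ℂ) • clS (n+1) (Fin.last n))) := by
  unfold clProdMod prefixProd
  rw [filter_split n r hr, List.map_append, List.prod_append, List.map_singleton,
    List.prod_singleton]
  congr 1
  · congr 1
    apply List.map_congr_left
    intro m hm
    rw [clFactorMod, Nat.add_sub_cancel, if_neg (mem_prefix_ne n r m hm)]
    rfl
  · rw [clFactorMod, Nat.add_sub_cancel, if_pos (Fin.val_last n)]

lemma clProdMod_other (n : ℕ) (lam : ℝ) (r : ℕ) (hr : n % 2 ≠ r) :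
    clProdMod (n+1) lam r = clProd (n+1) r := by
  unfold clProdMod clProd
  congr 1
  apply List.map_congr_left
  intro m hm
  have h2 : m.val % 2 = r := by simpa using (List.mem_filter.mp hm).2
  have h3 : m.val ≠ n := fun h => hr (h ▸ h2)
  rw [clFactorMod, Nat.add_sub_cancel, if_neg h3]
  rfl

/-- For every integer `N ≥ 3` and every `λ ∈ [0,1]`, the operator
`Y := W_C^λ − λ·W_C` is positive semidefinite, where `W_C` is the cluster-state
witness operator and `W_C^λ` its modified (unsharp) version. -/
theorem cluster_modifiedWitness_sub_smul_witness_posSemidef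
    (N : ℕ) (hN : 3 ≤ N) (lam : ℝ) (hlam : lam ∈ Set.Icc (0 : ℝ) 1) :
    (clWitnessMod N lam - (lam : ℂ) • clWitness N).PosSemidef := by

  obtain ⟨n, rfl⟩ : ∃ n, N = n + 1 := ⟨N - 1, by omega⟩
  obtain ⟨hl0, hl1⟩ := hlam
  have hc : (0 : ℝ) ≤ 1 - lam := by linarith
  have key : ∀ r0 r1 : ℕ, n % 2 = r0 → n % 2 ≠ r1 →
      clProdMod (n+1) lam r0 + clProdMod (n+1) lam r1
        - (lam : ℂ) • (clProd (n+1) r0 + clProd (n+1) r1)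
      = ((1 - lam : ℝ) : ℂ) • (clProd (n+1) r1 + ((1/2 : ℂ) • prefixProd n r0)) := by
    intro r0 r1 h0 h1
    rw [clProdMod_split n lam r0 h0, clProdMod_other n lam r1 h1, clProd_split n r0 h0,
      clFactor]
    simp only [smul_add, mul_smul_comm, mul_add, mul_one, smul_smul]
    push_cast
    module
  have hP1 := clProd_herm_idem (n+1) 1
  have hP0 := clProd_herm_idem (n+1) 0
  have hA0 := prefixProd_herm_idem n 0
  have hA1 := prefixProd_herm_idem n 1
  rcases Nat.mod_two_eq_zero_or_one n with hpar | hpar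
  · have hk := key 0 1 hpar (by omega)
    have hw : clWitnessMod (n+1) lam - (lam : ℂ) • clWitness (n+1)
        = (3 * (1 - lam : ℝ) : ℂ) • (1 : QM (n+1))
          - (2 : ℂ) • (((1 - lam : ℝ) : ℂ) • (clProd (n+1) 1 + (1/2 : ℂ) • prefixProd n 0)) := by
      rw [clWitnessMod, clWitness, ← hk]
      push_cast
      module
    rw [hw]
    have heq : (3 * (1 - lam : ℝ) : ℂ) • (1 : QM (n+1))
          - (2 : ℂ) • (((1 - lam : ℝ) : ℂ) • (clProd (n+1) 1 + (1/2 : ℂ) • prefixProd n 0))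
        = ((1 - lam : ℝ) : ℂ) • (((1 : QM (n+1)) - clProd (n+1) 1)
            + (((1 : QM (n+1)) - clProd (n+1) 1) + ((1 : QM (n+1)) - prefixProd n 0))) := by
      push_cast
      module
    rw [heq]
    apply psd_real_smul _ _ hc
    exact (one_sub_proj_psd _ _ hP1.1 hP1.2).add
      ((one_sub_proj_psd _ _ hP1.1 hP1.2).add (one_sub_proj_psd _ _ hA0.1 hA0.2))
  · have hk := key 1 0 hpar (by omega)
    have hw : clWitnessMod (n+1) lam - (lam : ℂ) • clWitness (n+1)
        = (3 * (1 - lam : ℝ) : ℂ) • (1 : QM (n+1))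
          - (2 : ℂ) • (((1 - lam : ℝ) : ℂ) • (clProd (n+1) 0 + (1/2 : ℂ) • prefixProd n 1)) := by
      rw [clWitnessMod, clWitness, ← hk]
      push_cast
      module
    rw [hw]
    have heq : (3 * (1 - lam : ℝ) : ℂ) • (1 : QM (n+1))
          - (2 : ℂ) • (((1 - lam : ℝ) : ℂ) • (clProd (n+1) 0 + (1/2 : ℂ) • prefixProd n 1))
        = ((1 - lam : ℝ) : ℂ) • (((1 : QM (n+1)) - clProd (n+1) 0)
            + (((1 : QM (n+1)) - clProd (n+1) 0) + ((1 : QM (n+1)) - prefixProd n 1))) := by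
      push_cast
      module
    rw [heq]
    apply psd_real_smul _ _ hc
    exact (one_sub_proj_psd _ _ hP0.1 hP0.2).add
      ((one_sub_proj_psd _ _ hP0.1 hP0.2).add (one_sub_proj_psd _ _ hA1.1 hA1.2))

end
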